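/- The 2×2 representation of αH_2 with σ = [[0,1],[1,q−q^{-1}]], y_i = [[a, −(q−q^{-1})b],[0,b]], y_{i+1} = [[b,(q−q^{-1})b],[0,a]] is irreducible if and only if a ≠ q^2 b and a ≠ q^{-2} b (for a ≠ b). -/

import Mathlib

section Aux

variable {F : Type*} [Field F]

lemma span_inv (M : Matrix (Fin 2) (Fin 2) F) (v : Fin 2 → F) (lam : F)
    (h : M.mulVec v = lam • v) :
    ∀ w ∈ Submodule.span F {v}, M.mulVec w ∈ Submodule.span F {v} := by
  intro w hw
  obtain ⟨c, rfl⟩ := Submodule.mem_span_singleton.mp hw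
  rw [Matrix.mulVec_smul, h]
  exact Submodule.smul_mem _ _ (Submodule.smul_mem _ _ (Submodule.mem_span_singleton_self v))

lemma top_of_e0 (W : Submodule F (Fin 2 → F))
    (h0 : (![1, 0] : Fin 2 → F) ∈ W) (h1 : (![0, 1] : Fin 2 → F) ∈ W) : W = ⊤ := by
  rw [Submodule.eq_top_iff']
  intro w
  have : w = w 0 • ![1, 0] + w 1 • ![0, 1] := by
    funext i; fin_cases i <;> simp
  rw [this]
  exact W.add_mem (W.smul_mem _ h0) (W.smul_mem _ h1)

lemma e0_of_c (W : Submodule F (Fin 2 → F)) (c : F) (hc : c ≠ 0)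
    (h : (![c, 0] : Fin 2 → F) ∈ W) : (![1, 0] : Fin 2 → F) ∈ W := by
  have := W.smul_mem c⁻¹ h
  have heq : c⁻¹ • (![c, 0] : Fin 2 → F) = ![1, 0] := by
    funext i; fin_cases i <;> simp [inv_mul_cancel₀ hc]
  rwa [heq] at this

end Aux

theorem affine_hecke_two_dim_irreducible_iff
    (F : Type*) [Field F] [IsAlgClosed F] (q a b : F)
    (hq : q ≠ 0) (hq2 : q ^ 2 ≠ 1) (ha : a ≠ 0) (hb : b ≠ 0) (hab : a ≠ b)
    (σ yi yi1 : Matrix (Fin 2) (Fin 2) F)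
    (hσ : σ = !![0, 1; 1, q - q⁻¹])
    (hyi : yi = !![a, -(q - q⁻¹) * b; 0, b])
    (hyi1 : yi1 = !![b, (q - q⁻¹) * b; 0, a]) :
    (∀ W : Submodule F (Fin 2 → F),
        (∀ v ∈ W, σ.mulVec v ∈ W) → (∀ v ∈ W, yi.mulVec v ∈ W) →
        (∀ v ∈ W, yi1.mulVec v ∈ W) → W = ⊥ ∨ W = ⊤) ↔
      (a ≠ q ^ 2 * b ∧ a ≠ (q⁻¹) ^ 2 * b) := by
  subst hσ hyi hyi1
  have hq' : q * q⁻¹ = 1 := mul_inv_cancel₀ hq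
  have hab' : a - b ≠ 0 := sub_ne_zero.mpr hab
  constructor
  · intro hirr
    constructor
    · -- a ≠ q^2 * b
      intro h
      set v : Fin 2 → F := ![q⁻¹, 1] with hv
      have hσe : (!![0, 1; 1, q - q⁻¹]).mulVec v = q • v := by
        funext i; fin_cases i <;>
          simp [hv, Matrix.mulVec, dotProduct, Fin.sum_univ_two] <;> field_simp
      have hyie : (!![a, -(q - q⁻¹) * b; 0, b]).mulVec v = b • v := by
        funext i; fin_cases i <;>
          simp [hv, h, Matrix.mulVec, dotProduct, Fin.sum_univ_two] <;> field_simp <;> ring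
      have hyi1e : (!![b, (q - q⁻¹) * b; 0, a]).mulVec v = a • v := by
        funext i; fin_cases i <;>
          simp [hv, h, Matrix.mulVec, dotProduct, Fin.sum_univ_two] <;> field_simp <;> ring
      rcases hirr (Submodule.span F {v}) (span_inv _ _ _ hσe) (span_inv _ _ _ hyie)
          (span_inv _ _ _ hyi1e) with hB | hT
      · have : v ∈ (⊥ : Submodule F (Fin 2 → F)) := hB ▸ Submodule.mem_span_singleton_self v
        have hv0 : v = 0 := by simpa using this
        have := congr_fun hv0 1
        simp [hv] at this
      · have : (![1, 0] : Fin 2 → F) ∈ Submodule.span F {v} := hT ▸ Submodule.mem_top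
        obtain ⟨c, hc⟩ := Submodule.mem_span_singleton.mp this
        have h1 := congr_fun hc 1
        have h0 := congr_fun hc 0
        simp [hv] at h1 h0
        rw [h1] at h0; simp at h0
    · -- a ≠ q⁻² * b
      intro h
      set v : Fin 2 → F := ![-q, 1] with hv
      have hσe : (!![0, 1; 1, q - q⁻¹]).mulVec v = (-q⁻¹) • v := by
        funext i; fin_cases i <;>
          simp [hv, Matrix.mulVec, dotProduct, Fin.sum_univ_two] <;> field_simp <;> ring
      have hyie : (!![a, -(q - q⁻¹) * b; 0, b]).mulVec v = b • v := by
        funext i; fin_cases i <;>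
          simp [hv, h, Matrix.mulVec, dotProduct, Fin.sum_univ_two] <;> field_simp <;> ring
      have hyi1e : (!![b, (q - q⁻¹) * b; 0, a]).mulVec v = a • v := by
        funext i; fin_cases i <;>
          simp [hv, h, Matrix.mulVec, dotProduct, Fin.sum_univ_two] <;> field_simp <;> ring
      rcases hirr (Submodule.span F {v}) (span_inv _ _ _ hσe) (span_inv _ _ _ hyie)
          (span_inv _ _ _ hyi1e) with hB | hT
      · have : v ∈ (⊥ : Submodule F (Fin 2 → F)) := hB ▸ Submodule.mem_span_singleton_self v
        have hv0 : v = 0 := by simpa using this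
        have := congr_fun hv0 1
        simp [hv] at this
      · have : (![1, 0] : Fin 2 → F) ∈ Submodule.span F {v} := hT ▸ Submodule.mem_top
        obtain ⟨c, hc⟩ := Submodule.mem_span_singleton.mp this
        have h1 := congr_fun hc 1
        have h0 := congr_fun hc 0
        simp [hv] at h1 h0
        rw [h1] at h0; simp at h0
  · rintro ⟨h1, h2⟩ W hσW hyiW hyi1W
    by_cases hbot : W = ⊥
    · exact Or.inl hbot
    right
    obtain ⟨v, hvW, hv⟩ := (Submodule.ne_bot_iff W).mp hbot
    have key : (![1, 0] : Fin 2 → F) ∈ W := by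
      by_cases hv1 : v 1 = 0
      · have hv0 : v 0 ≠ 0 := by
          intro h0
          exact hv (by funext i; fin_cases i <;> simp [h0, hv1])
        have heq : (v 0)⁻¹ • v = ![1, 0] := by
          funext i; fin_cases i <;> simp [hv1, inv_mul_cancel₀ hv0]
        have := W.smul_mem (v 0)⁻¹ hvW
        rwa [heq] at this
      · set c1 : F := (a - b) * v 0 - (q - q⁻¹) * b * v 1 with hc1def
        have hw1 : (!![a, -(q - q⁻¹) * b; 0, b]).mulVec v - b • v = ![c1, 0] := by
          funext i; fin_cases i <;>
            simp [hc1def, Matrix.mulVec, dotProduct, Fin.sum_univ_two] <;> ring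
        have hw1W : (![c1, 0] : Fin 2 → F) ∈ W := by
          rw [← hw1]; exact W.sub_mem (hyiW v hvW) (W.smul_mem b hvW)
        by_cases hc1 : c1 = 0
        · set c2 : F := v 1 ^ 2 - v 0 ^ 2 - (q - q⁻¹) * v 0 * v 1 with hc2def
          have hc2 : c2 ≠ 0 := by
            intro hc2z
            have hfac : (q * v 0 - v 1) * (v 0 + q * v 1) = 0 := by
              linear_combination (-q) * hc2z + (v 0 * v 1) * hq'
            have hc1' : (a - b) * v 0 - (q - q⁻¹) * b * v 1 = 0 := hc1
            rcases mul_eq_zero.mp hfac with hcase | hcase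
            · have hv1' : v 1 = q * v 0 := by linear_combination -hcase
              have hv0 : v 0 ≠ 0 := by
                intro h0; exact hv1 (by rw [hv1', h0, mul_zero])
              apply h1
              have hz : (a - q ^ 2 * b) * v 0 = 0 := by
                linear_combination hc1' + ((q - q⁻¹) * b) * hv1' - (b * v 0) * hq'
              rcases mul_eq_zero.mp hz with h | h
              · exact sub_eq_zero.mp h
              · exact absurd h hv0
            · have hv0' : v 0 = -q * v 1 := by linear_combination hcase
              apply h2
              have hz : (a - (q⁻¹) ^ 2 * b) * v 1 = 0 := by
                linear_combination (-q⁻¹) * hc1' + (q⁻¹ * (a - b)) * hv0' - (a * v 1) * hq'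
              rcases mul_eq_zero.mp hz with h | h
              · exact sub_eq_zero.mp h
              · exact absurd h hv1
          have hw2 : (v 1) • (!![0, 1; 1, q - q⁻¹]).mulVec v
              - (v 0 + (q - q⁻¹) * v 1) • v = ![c2, 0] := by
            funext i; fin_cases i <;>
              simp [hc2def, Matrix.mulVec, dotProduct, Fin.sum_univ_two] <;> ring
          have hw2W : (![c2, 0] : Fin 2 → F) ∈ W := by
            rw [← hw2]
            exact W.sub_mem (W.smul_mem _ (hσW v hvW)) (W.smul_mem _ hvW)
          exact e0_of_c W c2 hc2 hw2W
        · exact e0_of_c W c1 hc1 hw1W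
    have key2 : (![0, 1] : Fin 2 → F) ∈ W := by
      have := hσW _ key
      have heq : (!![0, 1; 1, q - q⁻¹]).mulVec ![1, 0] = ![0, 1] := by
        funext i; fin_cases i <;>
          simp [Matrix.mulVec, dotProduct, Fin.sum_univ_two]
      rwa [heq] at this
    exact top_of_e0 W key key2
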